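/- arXiv:2103.00041 — 7 statements merged into one kernel-verified Lean document; each statement's English description precedes it below -/
import Mathlib

section
/- Let L be a linear subspace of the space of n×n real symmetric matrices. Then exactly one of the following holds: (1) L contains a nonzero positive semidefinite matrix; (2) the orthogonal complement of L (with respect to the trace inner product) contains a positive definite matrix. -/
open scoped Matrix
attribute [local instance] Matrix.normedAddCommGroup Matrix.normedSpace

section Aux
variable {n : ℕ}

private def qfLM (x : Fin n → ℝ) : Matrix (Fin n) (Fin n) ℝ →ₗ[ℝ] ℝ where
  toFun X := x ⬝ᵥ X *ᵥ x
  map_add' X Y := by simp [Matrix.add_mulVec, dotProduct_add]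
  map_smul' c X := by simp [Matrix.smul_mulVec, dotProduct_smul]

private lemma qfLM_apply (x : Fin n → ℝ) (X : Matrix (Fin n) (Fin n) ℝ) :
    qfLM x X = x ⬝ᵥ X *ᵥ x := rfl

private lemma conj_qf (S B : Matrix (Fin n) (Fin n) ℝ) (y : Fin n → ℝ) :
    star y ⬝ᵥ (Sᴴ * B * S) *ᵥ y = star (S *ᵥ y) ⬝ᵥ B *ᵥ (S *ᵥ y) := by
  simp only [Matrix.star_mulVec, Matrix.dotProduct_mulVec, Matrix.vecMul_vecMul,
    Matrix.mulVec_mulVec, mul_assoc]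

open scoped MatrixOrder in
private lemma trace_pos_of_psd_pd {A B : Matrix (Fin n) (Fin n) ℝ}
    (hA : A.PosSemidef) (hB : B.PosDef) (hA0 : A ≠ 0) : 0 < (A * B).trace := by
  set S := CFC.sqrt A with hSdef
  have hSH : Sᴴ = S := (Matrix.nonneg_iff_posSemidef.mp (CFC.sqrt_nonneg A)).1
  have hAS : S * S = A := CFC.sqrt_mul_sqrt_self A hA.nonneg
  set M := Sᴴ * B * S with hMdef
  have hMpsd : M.PosSemidef := hB.posSemidef.conjTranspose_mul_mul_same S
  have key : (A * B).trace = M.trace := by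
    rw [hMdef, hSH, ← hAS, mul_assoc, mul_assoc, Matrix.trace_mul_comm, mul_assoc]
  have hdiag : ∀ i, M i i = star (S *ᵥ Pi.single i 1) ⬝ᵥ B *ᵥ (S *ᵥ Pi.single i 1) := by
    intro i
    have h1 : M i i = star (Pi.single i 1) ⬝ᵥ M *ᵥ Pi.single i 1 := by
      simp [Matrix.mulVec_single, single_dotProduct]
    rw [h1, hMdef, conj_qf]
  have hS0 : S ≠ 0 := by
    intro h; apply hA0; rw [← hAS, h, mul_zero]
  obtain ⟨i, j, hij⟩ : ∃ i j, S i j ≠ 0 := by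
    by_contra h; push_neg at h; exact hS0 (by ext i j; simpa using h i j)
  have hcol : S *ᵥ Pi.single j 1 ≠ 0 := by
    intro h
    apply hij
    have := congrFun h i
    simpa [Matrix.mulVec_single] using this
  have hpos : 0 < M j j := by
    rw [hdiag j]
    exact hB.dotProduct_mulVec_pos hcol
  rw [key, Matrix.trace]
  refine Finset.sum_pos' (fun i _ => ?_) ⟨j, Finset.mem_univ j, hpos⟩
  rw [Matrix.diag_apply, hdiag i]
  exact hB.posSemidef.dotProduct_mulVec_nonneg _

private lemma trace_mul_repr (f : Matrix (Fin n) (Fin n) ℝ →ₗ[ℝ] ℝ)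
    (A : Matrix (Fin n) (Fin n) ℝ) :
    (A * Matrix.of fun j i => f (Matrix.single i j (1:ℝ))).trace = f A := by
  conv_rhs => rw [Matrix.matrix_eq_sum_single A]
  rw [map_sum]
  rw [Matrix.trace]
  simp only [Matrix.diag_apply, Matrix.mul_apply, Matrix.of_apply]
  refine Finset.sum_congr rfl fun i _ => ?_
  rw [map_sum]
  refine Finset.sum_congr rfl fun j _ => ?_
  rw [← smul_eq_mul, ← map_smul, Matrix.smul_single, smul_eq_mul, mul_one]

private lemma trace_vecMulVec_mul (x : Fin n → ℝ) (B : Matrix (Fin n) (Fin n) ℝ) :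
    (Matrix.vecMulVec x x * B).trace = x ⬝ᵥ B *ᵥ x := by
  rw [Matrix.trace]
  simp only [Matrix.diag_apply, Matrix.mul_apply, Matrix.vecMulVec_apply,
    dotProduct, Matrix.mulVec]
  rw [Finset.sum_comm]
  refine Finset.sum_congr rfl fun i _ => ?_
  rw [Finset.mul_sum]
  refine Finset.sum_congr rfl fun j _ => ?_
  ring

private lemma psd_entry_le {X : Matrix (Fin n) (Fin n) ℝ}
    (hX : X.PosSemidef) (htr : X.trace = 1) (i j : Fin n) : |X i j| ≤ 1 := by
  have hdiag : ∀ k, 0 ≤ X k k := by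
    intro k
    have := hX.dotProduct_mulVec_nonneg (Pi.single k 1)
    simpa [Matrix.mulVec_single, single_dotProduct] using this
  have hsum : ∑ k, X k k = 1 := htr
  have hle : ∀ k, X k k ≤ 1 := by
    intro k
    calc X k k ≤ ∑ l, X l l := Finset.single_le_sum (fun l _ => hdiag l) (Finset.mem_univ k)
    _ = 1 := hsum
  have hsymm : X j i = X i j := by
    have := congrFun (congrFun hX.1 j) i
    simpa [Matrix.conjTranspose_apply] using this.symm
  have hq : ∀ c : ℝ, 0 ≤ X i i + c * (X i j + X j i) + c^2 * X j j := by
    intro c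
    have := hX.dotProduct_mulVec_nonneg (Pi.single i 1 + Pi.single j c)
    simp only [star_trivial, Matrix.mulVec_add, Matrix.mulVec_single,
      dotProduct_add, add_dotProduct, single_dotProduct, Pi.smul_apply, op_smul_eq_mul,
      Matrix.col_apply] at this
    · nlinarith [this]
  have h1 := hq 1
  have h2 := hq (-1)
  rw [abs_le]
  constructor <;> nlinarith [hdiag i, hdiag j, hle i, hle j]

end Aux

/-- Gordan–Stiemke type alternative: for a linear subspace `L` of real symmetric
`n × n` matrices, exactly one of the following holds:
(1) `L` contains a nonzero positive semidefinite matrix;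
(2) the orthogonal complement of `L` (w.r.t. the trace inner product, within
symmetric matrices) contains a positive definite matrix. -/
theorem psd_subspace_alternative (n : ℕ)
    (L : Submodule ℝ (Matrix (Fin n) (Fin n) ℝ))
    (hL : ∀ A ∈ L, A.IsSymm) :
    Xor'
      (∃ A ∈ L, A ≠ 0 ∧ A.PosSemidef)
      (∃ B : Matrix (Fin n) (Fin n) ℝ, B.IsSymm ∧
        (∀ A ∈ L, (A * B).trace = 0) ∧ B.PosDef) := by
  by_cases h1 : ∃ A ∈ L, A ≠ 0 ∧ A.PosSemidef
  · left
    refine ⟨h1, ?_⟩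
    rintro ⟨B, hBsymm, hBperp, hBpd⟩
    obtain ⟨A, hAL, hA0, hApsd⟩ := h1
    have := trace_pos_of_psd_pd hApsd hBpd hA0
    rw [hBperp A hAL] at this
    exact lt_irrefl 0 this
  · right
    refine ⟨?_, h1⟩
    push_neg at h1
    set C : Set (Matrix (Fin n) (Fin n) ℝ) := {X | X.PosSemidef ∧ X.trace = 1} with hCdef
    -- C is convex
    have hCconv : Convex ℝ C := by
      rintro X ⟨hXpsd, hXtr⟩ Y ⟨hYpsd, hYtr⟩ a b ha hb hab
      refine ⟨Matrix.PosSemidef.of_dotProduct_mulVec_nonneg ?_ ?_, ?_⟩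
      · show (a • X + b • Y)ᴴ = a • X + b • Y
        rw [Matrix.conjTranspose_add]
        rw [Matrix.conjTranspose_smul, Matrix.conjTranspose_smul]
        simp only [star_trivial]
        rw [hXpsd.1, hYpsd.1]
      · intro x
        have h1 := hXpsd.dotProduct_mulVec_nonneg x
        have h2 := hYpsd.dotProduct_mulVec_nonneg x
        simp only [Matrix.add_mulVec, Matrix.smul_mulVec,
          dotProduct_add, dotProduct_smul, smul_eq_mul] at *
        exact add_nonneg (mul_nonneg ha h1) (mul_nonneg hb h2)
      · rw [Matrix.trace_add, Matrix.trace_smul, Matrix.trace_smul, hXtr, hYtr]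
        simpa using hab
    -- C is compact
    have hCclosed : IsClosed C := by
      have h1 : IsClosed {X : Matrix (Fin n) (Fin n) ℝ | X.trace = 1} :=
        isClosed_eq (Matrix.traceLinearMap (Fin n) ℝ ℝ).continuous_of_finiteDimensional
          continuous_const
      have h2 : ∀ x : Fin n → ℝ, IsClosed {X : Matrix (Fin n) (Fin n) ℝ | 0 ≤ qfLM x X} :=
        fun x => isClosed_le continuous_const (qfLM x).continuous_of_finiteDimensional
      have hcontT : Continuous fun X : Matrix (Fin n) (Fin n) ℝ => Xᵀ :=
        (Matrix.transposeLinearEquiv (Fin n) (Fin n) ℝ ℝ).toLinearMap.continuous_of_finiteDimensional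
      have h3 : IsClosed {X : Matrix (Fin n) (Fin n) ℝ | Xᵀ = X} :=
        isClosed_eq hcontT continuous_id
      have hC : C = {X : Matrix (Fin n) (Fin n) ℝ | Xᵀ = X} ∩
          ((⋂ x : Fin n → ℝ, {X | 0 ≤ qfLM x X}) ∩ {X | X.trace = 1}) := by
        ext X
        simp only [hCdef, Set.mem_setOf_eq, Set.mem_inter_iff, Set.mem_iInter,
          Matrix.posSemidef_iff_dotProduct_mulVec, qfLM_apply]
        constructor
        · rintro ⟨⟨hh, hq⟩, htr⟩
          refine ⟨?_, fun x => by simpa using hq x, htr⟩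
          have : Xᴴ = X := hh
          simpa [Matrix.conjTranspose_eq_transpose_of_trivial] using this
        · rintro ⟨hs, hq, htr⟩
          refine ⟨⟨?_, fun x => by simpa using hq x⟩, htr⟩
          show Xᴴ = X
          simpa [Matrix.conjTranspose_eq_transpose_of_trivial] using hs
      rw [hC]
      exact h3.inter ((isClosed_iInter h2).inter h1)
    have hCcomp : IsCompact C := by
      refine Metric.isCompact_of_isClosed_isBounded hCclosed ?_
      refine (Metric.isBounded_closedBall (x := (0 : Matrix (Fin n) (Fin n) ℝ))
        (r := 1)).subset ?_
      intro X hX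
      rw [Metric.mem_closedBall, dist_zero_right]
      rw [Matrix.norm_le_iff zero_le_one]
      intro i j
      rw [Real.norm_eq_abs]
      exact psd_entry_le hX.1 hX.2 i j
    -- L is closed and convex, disjoint from C
    have hLclosed : IsClosed (L : Set (Matrix (Fin n) (Fin n) ℝ)) :=
      L.closed_of_finiteDimensional
    have hdisj : Disjoint C (L : Set (Matrix (Fin n) (Fin n) ℝ)) := by
      rw [Set.disjoint_left]
      rintro X ⟨hXpsd, hXtr⟩ hXL
      have hX0 : X ≠ 0 := by
        intro h
        rw [h] at hXtr
        simp at hXtr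
      exact h1 X hXL hX0 hXpsd
    haveI : LocallyConvexSpace ℝ (Matrix (Fin n) (Fin n) ℝ) :=
      inferInstanceAs (LocallyConvexSpace ℝ (Fin n → Fin n → ℝ))
    obtain ⟨f, u, v, hfu, huv, hfv⟩ :=
      geometric_hahn_banach_compact_closed hCconv hCcomp L.convex hLclosed hdisj
    -- f vanishes on L
    have hfL : ∀ A ∈ L, f A = 0 := by
      intro A hAL
      by_contra hfA
      have := hfv (((v - 1) / f A) • A) (L.smul_mem _ hAL)
      rw [map_smul, smul_eq_mul, div_mul_cancel₀ _ hfA] at this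
      linarith
    have hv0 : v < 0 := by
      have := hfv 0 L.zero_mem
      simpa using this
    have hfC : ∀ X ∈ C, f X < 0 := fun X hX => (hfu X hX).trans (huv.trans hv0)
    -- build B
    set B₀ : Matrix (Fin n) (Fin n) ℝ :=
      Matrix.of fun j i => (f : Matrix (Fin n) (Fin n) ℝ →ₗ[ℝ] ℝ) (Matrix.single i j 1)
      with hB₀def
    have hrepr : ∀ A : Matrix (Fin n) (Fin n) ℝ, (A * B₀).trace = f A := fun A =>
      trace_mul_repr (f : Matrix (Fin n) (Fin n) ℝ →ₗ[ℝ] ℝ) A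
    set B : Matrix (Fin n) (Fin n) ℝ := (-(1/2) : ℝ) • (B₀ + B₀ᵀ) with hBdef
    have hBsymm : B.IsSymm := by
      rw [Matrix.IsSymm, hBdef, Matrix.transpose_smul, Matrix.transpose_add,
        Matrix.transpose_transpose, add_comm]
    have htr : ∀ A : Matrix (Fin n) (Fin n) ℝ, A.IsSymm → (A * B).trace = -(f A) := by
      intro A hAs
      have h0 : (A * B₀ᵀ).trace = (A * B₀).trace := by
        rw [← Matrix.trace_transpose, Matrix.transpose_mul, Matrix.transpose_transpose,
          Matrix.trace_mul_comm, hAs]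
      rw [hBdef, Matrix.mul_smul, Matrix.trace_smul, Matrix.mul_add, Matrix.trace_add,
        h0, hrepr, smul_eq_mul]
      ring
    refine ⟨B, hBsymm, fun A hAL => by rw [htr A (hL A hAL), hfL A hAL, neg_zero],
      Matrix.PosDef.of_dotProduct_mulVec_pos ?_ ?_⟩
    · -- B is Hermitian
      show Bᴴ = B
      simpa [Matrix.conjTranspose_eq_transpose_of_trivial] using hBsymm.eq
    · -- positive definiteness
      intro x hx
      have hxx : 0 < x ⬝ᵥ x := by
        simpa using Matrix.dotProduct_star_self_pos_iff (v := x) |>.mpr hx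
      set c : ℝ := (x ⬝ᵥ x)⁻¹ with hcdef
      have hc : 0 < c := inv_pos.mpr hxx
      set X : Matrix (Fin n) (Fin n) ℝ := c • Matrix.vecMulVec x x with hXdef
      have hvpsd : (Matrix.vecMulVec x x).PosSemidef := by
        have hrow : Matrix.vecMulVec x x = (Matrix.replicateRow Unit x)ᴴ * Matrix.replicateRow Unit x := by
          rw [Matrix.vecMulVec_eq Unit, Matrix.conjTranspose_replicateRow]
          simp
        rw [hrow]
        exact Matrix.posSemidef_conjTranspose_mul_self _
      have hXpsd : X.PosSemidef := by
        refine Matrix.PosSemidef.of_dotProduct_mulVec_nonneg ?_ ?_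
        · show Xᴴ = X
          rw [hXdef, Matrix.conjTranspose_smul]
          simp only [star_trivial]
          rw [hvpsd.1]
        · intro y
          have := hvpsd.dotProduct_mulVec_nonneg y
          rw [hXdef]
          simp only [Matrix.smul_mulVec, dotProduct_smul, smul_eq_mul]
          exact mul_nonneg hc.le this
      have hXtr : X.trace = 1 := by
        rw [hXdef, Matrix.trace_smul]
        have : (Matrix.vecMulVec x x).trace = x ⬝ᵥ x := by
          rw [Matrix.trace]
          simp [Matrix.diag_apply, Matrix.vecMulVec_apply, dotProduct]
        rw [this, smul_eq_mul, hcdef, inv_mul_cancel₀ hxx.ne']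
      have hXC : X ∈ C := ⟨hXpsd, hXtr⟩
      have hfX := hfC X hXC
      have hXsymm : X.IsSymm := by
        have : Xᴴ = X := hXpsd.1
        rw [Matrix.IsSymm]
        simpa [Matrix.conjTranspose_eq_transpose_of_trivial] using this
      have h2 : (X * B).trace = -(f X) := htr X hXsymm
      have h3 : 0 < (X * B).trace := by rw [h2]; linarith
      rw [hXdef, Matrix.smul_mul, Matrix.trace_smul, smul_eq_mul,
        trace_vecMulVec_mul] at h3
      have h4 : 0 < x ⬝ᵥ B *ᵥ x := by
        by_contra h
        push_neg at h
        nlinarith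
      simpa using h4
end

section
/- Any sequence defined by the recursion α_{j+1} = 2 - 1/(α_{j+2} α_{j+3} ··· α_{t_{j+1}}) with α_k = 2, where each tail index t_{j+1} satisfies j+1 < t_{j+1} ≤ k (the empty product being 1 when t_{j+1} = j+1 does not occur), satisfies 1 < α_{j+1} ≤ 2 for all j = 1, ..., k-1. -/
/-- Any sequence defined by the recursion
`α (j+1) = 2 - 1 / (α (j+2) ⋯ α (t (j+1)))` (and `α (j+1) = 2` when
`t (j+1) = k+1`), with `α k = 2` and tail indices `j+2 ≤ t (j+1) ≤ k+1`,
satisfies `1 < α (j+1) ≤ 2` for all `j = 1, …, k-1`. -/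
theorem alpha_in_one_two (k : ℕ) (hk : 2 ≤ k) (t : ℕ → ℕ) (α : ℕ → ℝ)
    (ht : ∀ j, 1 ≤ j → j ≤ k - 2 → j + 2 ≤ t (j + 1) ∧ t (j + 1) ≤ k + 1)
    (hbase : α k = 2)
    (hrec : ∀ j, 1 ≤ j → j ≤ k - 2 →
      (t (j + 1) = k + 1 → α (j + 1) = 2) ∧
      (t (j + 1) ≤ k →
        α (j + 1) = 2 - 1 / (∏ i ∈ Finset.Icc (j + 2) (t (j + 1)), α i))) :
    ∀ j, 1 ≤ j → j ≤ k - 1 → 1 < α (j + 1) ∧ α (j + 1) ≤ 2 := by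
  have key : ∀ n : ℕ, ∀ j, k - j ≤ n → 1 ≤ j → j ≤ k - 1 →
      1 < α (j + 1) ∧ α (j + 1) ≤ 2 := by
    intro n
    induction n with
    | zero =>
      intro j hn h1 h2
      omega
    | succ n ih =>
      intro j hn h1 h2
      rcases eq_or_lt_of_le h2 with hjk | hjk
      · have : j + 1 = k := by omega
        rw [this, hbase]; norm_num
      · have hj2 : j ≤ k - 2 := by omega
        obtain ⟨ht1, ht2⟩ := ht j h1 hj2
        obtain ⟨hr1, hr2⟩ := hrec j h1 hj2
        rcases eq_or_lt_of_le ht2 with htop | htk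
        · rw [hr1 htop]; norm_num
        · have htk' : t (j + 1) ≤ k := by omega
          have hall : ∀ i ∈ Finset.Icc (j + 2) (t (j + 1)), 1 < α i := by
            intro i hi
            simp only [Finset.mem_Icc] at hi
            have hi1 : i = (i - 1) + 1 := by omega
            rw [hi1]
            exact (ih (i - 1) (by omega) (by omega) (by omega)).1
          have hne : (Finset.Icc (j + 2) (t (j + 1))).Nonempty :=
            ⟨j + 2, by simp [Finset.mem_Icc]; omega⟩
          have hprod : 1 < ∏ i ∈ Finset.Icc (j + 2) (t (j + 1)), α i := by
            have := Finset.prod_lt_prod_of_nonempty (f := fun _ => (1:ℝ)) (g := α)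
              (fun i _ => one_pos) hall hne
            simpa using this
          have hpos : (0:ℝ) < ∏ i ∈ Finset.Icc (j + 2) (t (j + 1)), α i :=
            lt_trans one_pos hprod
          rw [hr2 htk']
          constructor
          · have : 1 / (∏ i ∈ Finset.Icc (j + 2) (t (j + 1)), α i) < 1 := by
              rw [div_lt_one hpos]; exact hprod
            linarith
          · have : 0 < 1 / (∏ i ∈ Finset.Icc (j + 2) (t (j + 1)), α i) :=
              by positivity
            linarith
  intro j h1 h2
  exact key (k - j) j le_rfl h1 h2
end

section
/- Suppose x_1, x_2, x_3 are real numbers with x_3 ≥ 10 satisfying x_1 - 2x_2 ≥ (x_2 - x_3)^2 and x_2 + x_3 ≥ x_3^2. Then x_2 ≥ (1/2) x_3^2 and x_1 ≥ (1/2) x_2^2. -/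
/-- Perturbed Khachiyan: if `x₃ ≥ 10`, `x₁ - 2x₂ ≥ (x₂ - x₃)²` and
`x₂ + x₃ ≥ x₃²`, then `x₂ ≥ x₃²/2` and `x₁ ≥ x₂²/2`. -/
theorem perturbed_khachiyan (x₁ x₂ x₃ : ℝ) (h₃ : x₃ ≥ 10)
    (h1 : x₁ - 2 * x₂ ≥ (x₂ - x₃) ^ 2)
    (h2 : x₂ + x₃ ≥ x₃ ^ 2) :
    x₂ ≥ (1 / 2) * x₃ ^ 2 ∧ x₁ ≥ (1 / 2) * x₂ ^ 2 := by
  have hb : x₂ ≥ x₃ ^ 2 - x₃ := by linarith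
  constructor
  · nlinarith [sq_nonneg x₃, sq_nonneg (x₃ - 2)]
  · nlinarith [sq_nonneg (x₂ - x₃), sq_nonneg (x₂ - 2 * x₃), sq_nonneg (x₃ - 4), mul_nonneg (sub_nonneg.2 hb) (sub_nonneg.2 hb)]
end

section
/- If positive reals x_1, ..., x_k satisfy x_j x_{j+2} ≥ x_{j+1}^2 for j = 1, ..., k-2 and x_{k-1} ≥ x_k^2, then x_j ≥ x_{j+1}^{1 + 1/(k-j)} for all j = 1, ..., k-1, provided x_k ≥ 1. -/
/-- Minimal tail-index chain: if positive reals satisfy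
`x j * x (j+2) ≥ x (j+1)²` for `j = 1, …, k-2` and `x (k-1) ≥ (x k)²` with
`x k ≥ 1`, then `x j ≥ x (j+1) ^ (1 + 1/(k-j))` for all `j = 1, …, k-1`. -/
theorem minimal_tail_index_chain (k : ℕ) (hk : 2 ≤ k) (x : ℕ → ℝ)
    (hpos : ∀ j, 1 ≤ j → j ≤ k → 0 < x j)
    (hxk : x k ≥ 1)
    (hchain : ∀ j, 1 ≤ j → j ≤ k - 2 → x j * x (j + 2) ≥ (x (j + 1)) ^ 2)
    (hlast : x (k - 1) ≥ (x k) ^ 2) :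
    ∀ j, 1 ≤ j → j ≤ k - 1 →
      x j ≥ (x (j + 1)) ^ ((1 : ℝ) + 1 / ((k : ℝ) - (j : ℝ))) := by
  suffices h : ∀ d j, 1 ≤ j → j + d = k - 1 →
      x j ≥ (x (j + 1)) ^ ((1 : ℝ) + 1 / ((k : ℝ) - (j : ℝ))) by
    intro j hj1 hjk
    exact h (k - 1 - j) j hj1 (by omega)
  intro d
  induction d with
  | zero =>
    intro j hj1 hj
    have hjk : j + 1 = k := by omega
    have hc : (k : ℝ) - (j : ℝ) = 1 := by
      have : ((j : ℝ) + 1) = (k : ℝ) := by exact_mod_cast congrArg (Nat.cast : ℕ → ℝ) hjk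
      linarith
    have he : (1 : ℝ) + 1 / ((k : ℝ) - (j : ℝ)) = ((2 : ℕ) : ℝ) := by rw [hc]; norm_num
    rw [he, Real.rpow_natCast, hjk]
    have : j = k - 1 := by omega
    rw [this]
    exact hlast
  | succ d ih =>
    intro j hj1 hj
    have hj2 : (j + 1) + d = k - 1 := by omega
    have hjk2 : j + 2 ≤ k := by omega
    have ih' := ih (j + 1) (by omega) hj2
    have hx1 : 0 < x (j + 1) := hpos _ (by omega) (by omega)
    have hx2 : 0 < x (j + 2) := hpos _ (by omega) hjk2
    set c : ℝ := (k : ℝ) - (j : ℝ) with hcdef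
    have hcge : (2 : ℝ) ≤ c := by
      have : ((j : ℝ) + 2) ≤ (k : ℝ) := by exact_mod_cast hjk2
      simp only [hcdef]; linarith
    have hcm1 : (0 : ℝ) < c - 1 := by linarith
    have hcpos : (0 : ℝ) < c := by linarith
    have ih2 : x (j + 1) ≥ x (j + 2) ^ ((1 : ℝ) + 1 / (c - 1)) := by
      have harg : (1 : ℝ) + 1 / ((k : ℝ) - ((j + 1 : ℕ) : ℝ)) = (1 : ℝ) + 1 / (c - 1) := by
        push_cast; ring_nf; rw [hcdef]; ring_nf
      rw [show ((j+1)+1) = j + 2 from rfl, harg] at ih'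
      exact ih'
    have e1 : (1 : ℝ) + 1 / (c - 1) = c / (c - 1) := by field_simp; ring
    have h2 : x (j + 2) ≤ x (j + 1) ^ ((c - 1) / c) := by
      have key : (x (j + 2) ^ ((1 : ℝ) + 1 / (c - 1))) ^ ((c - 1) / c) = x (j + 2) := by
        rw [← Real.rpow_mul hx2.le, e1,
          show c / (c - 1) * ((c - 1) / c) = 1 by field_simp, Real.rpow_one]
      calc x (j + 2) = (x (j + 2) ^ ((1 : ℝ) + 1 / (c - 1))) ^ ((c - 1) / c) := key.symm
        _ ≤ x (j + 1) ^ ((c - 1) / c) :=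
            Real.rpow_le_rpow (Real.rpow_nonneg hx2.le _) ih2
              (div_nonneg (by linarith) (by linarith))
    have h3 : x (j + 1) ^ 2 / x (j + 2) ≤ x j := by
      rw [div_le_iff₀ hx2]
      exact hchain j hj1 (by omega)
    have h4 : x (j + 1) ^ 2 / x (j + 1) ^ ((c - 1) / c) ≤ x (j + 1) ^ 2 / x (j + 2) := by
      gcongr
    have h5 : x (j + 1) ^ 2 / x (j + 1) ^ ((c - 1) / c) = x (j + 1) ^ ((1 : ℝ) + 1 / c) := by
      rw [← Real.rpow_natCast (x (j + 1)) 2, ← Real.rpow_sub hx1]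
      congr 1
      push_cast
      field_simp
      ring
    calc x (j + 1) ^ ((1 : ℝ) + 1 / c) = x (j + 1) ^ 2 / x (j + 1) ^ ((c - 1) / c) := h5.symm
      _ ≤ x (j + 1) ^ 2 / x (j + 2) := h4
      _ ≤ x j := h3
end

section
/- Let y ∈ ℝ^{2n} be such that the (n+1)×(n+1) Hankel moment matrix H with H_{ij} = y_{i+j-2} (where y_0 := 1, indices i,j from 1 to n+1) is positive semidefinite. Then y_{2(n-j+1)} ≥ y_{2(n-j)}^{1 + 1/(n-j)} for j = 1, ..., n-1, provided y_2 ≥ 1; in particular y_{2n} ≥ y_2^n. -/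
open Matrix

lemma aux_diag {m : ℕ} (H : Matrix (Fin m) (Fin m) ℝ) (hpsd : H.PosSemidef)
    (i : Fin m) : 0 ≤ H i i := by
  have h := hpsd.dotProduct_mulVec_nonneg (Pi.single i 1)
  simpa [mulVec_single, dotProduct_single, star_trivial, single_dotProduct] using h

lemma aux_offdiag {m : ℕ} (H : Matrix (Fin m) (Fin m) ℝ) (hpsd : H.PosSemidef)
    (i j : Fin m) : (H i j + H j i) ^ 2 ≤ 4 * (H i i * H j j) := by
  have hq : ∀ t : ℝ, 0 ≤ H i i * (t * t) + (H i j + H j i) * t + H j j := by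
    intro t
    set x : Fin m → ℝ := t • (Pi.single i (1 : ℝ) : Fin m → ℝ) + (Pi.single j (1 : ℝ) : Fin m → ℝ) with hx
    have h := hpsd.dotProduct_mulVec_nonneg x
    rw [hx] at h
    simp only [star_trivial, mulVec_add, mulVec_smul, mulVec_single, mul_one,
      add_dotProduct, smul_dotProduct, dotProduct_add, smul_eq_mul,
      single_dotProduct, one_mul, smul_add, Pi.add_apply, Pi.smul_apply,
      dotProduct_single_one, smul_dotProduct] at h
    simp only [MulOpposite.op_one, one_smul, Matrix.col_apply] at h
    linarith [h]
  have := discrim_le_zero hq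
  rw [discrim] at this
  nlinarith [this]

lemma aux_chain (N : ℕ) (a : ℕ → ℝ) (h0 : a 0 = 1) (h1 : 1 ≤ a 1)
    (hnn : ∀ k, k ≤ N → 0 ≤ a k)
    (key : ∀ k, 1 ≤ k → k < N → a k ^ 2 ≤ a (k - 1) * a (k + 1)) :
    ∀ k, 1 ≤ k → k ≤ N →
      1 ≤ a k ∧ a 1 ^ k ≤ a k ∧ (k < N → a k ^ (k + 1) ≤ a (k + 1) ^ k) := by
  intro k hk1
  induction k, hk1 using Nat.le_induction with
  | base =>
    intro h1N
    refine ⟨h1, by simp, fun h1N' => ?_⟩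
    have := key 1 le_rfl h1N'
    simpa [h0] using this
  | succ k hk ih =>
    intro hkN
    obtain ⟨hak1, hak2, hak3⟩ := ih (by omega)
    have hstep : a k ^ (k + 1) ≤ a (k + 1) ^ k := hak3 (by omega)
    have hnn1 : 0 ≤ a (k + 1) := hnn _ (by omega)
    have h1ak1 : 1 ≤ a (k + 1) := by
      have : (1 : ℝ) ≤ a (k + 1) ^ k := le_trans (one_le_pow₀ hak1) hstep
      exact (one_le_pow_iff_of_nonneg hnn1 (by omega)).mp this
    have ha1k1 : a 1 ^ (k + 1) ≤ a (k + 1) := by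
      have h2 : (a 1 ^ (k + 1)) ^ k ≤ a (k + 1) ^ k := by
        calc (a 1 ^ (k + 1)) ^ k = (a 1 ^ k) ^ (k + 1) := by
              rw [← pow_mul, ← pow_mul, Nat.mul_comm]
          _ ≤ a k ^ (k + 1) := pow_le_pow_left₀ (by positivity) hak2 _
          _ ≤ a (k + 1) ^ k := hstep
      exact (pow_le_pow_iff_left₀ (by positivity) hnn1 (by omega)).mp h2
    refine ⟨h1ak1, ha1k1, fun hk1N => ?_⟩
    have hkey := key (k + 1) (by omega) hk1N
    simp only [Nat.add_sub_cancel] at hkey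
    have hnn2 : 0 ≤ a (k + 2) := hnn _ (by omega)
    have hmain : a (k + 1) ^ (k + 2) * a (k + 1) ^ k ≤ a (k + 2) ^ (k + 1) * a (k + 1) ^ k := by
      calc a (k + 1) ^ (k + 2) * a (k + 1) ^ k = (a (k + 1) ^ 2) ^ (k + 1) := by ring
        _ ≤ (a k * a (k + 2)) ^ (k + 1) := pow_le_pow_left₀ (by positivity) hkey _
        _ = a k ^ (k + 1) * a (k + 2) ^ (k + 1) := mul_pow _ _ _
        _ ≤ a (k + 1) ^ k * a (k + 2) ^ (k + 1) :=
            mul_le_mul_of_nonneg_right hstep (by positivity)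
        _ = a (k + 2) ^ (k + 1) * a (k + 1) ^ k := mul_comm _ _
    exact le_of_mul_le_mul_right hmain (by positivity)

/-- If the `(n+1) × (n+1)` Hankel moment matrix `H i j = y (i+j)` (with
`y 0 := 1`) is positive semidefinite and `y 2 ≥ 1`, then
`y (2(n-j+1)) ≥ y (2(n-j)) ^ (1 + 1/(n-j))` for `j = 1, …, n-1`; in
particular `y (2n) ≥ (y 2)^n`. -/
theorem hankel_large_solutions (n : ℕ) (hn : 2 ≤ n) (y : ℕ → ℝ)
    (hy0 : y 0 = 1) (hy2 : y 2 ≥ 1)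
    (H : Matrix (Fin (n + 1)) (Fin (n + 1)) ℝ)
    (hH : ∀ i j : Fin (n + 1), H i j = y ((i : ℕ) + (j : ℕ)))
    (hpsd : H.PosSemidef) :
    (∀ j, 1 ≤ j → j ≤ n - 1 →
      y (2 * (n - j + 1)) ≥
        (y (2 * (n - j))) ^ ((1 : ℝ) + 1 / ((n : ℝ) - (j : ℝ)))) ∧
    y (2 * n) ≥ (y 2) ^ (n : ℝ) := by
  set a : ℕ → ℝ := fun k => y (2 * k) with ha
  have h0 : a 0 = 1 := by simp [ha, hy0]
  have h1 : 1 ≤ a 1 := by simpa [ha] using hy2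
  have hnn : ∀ k, k ≤ n → 0 ≤ a k := by
    intro k hk
    have hd := aux_diag H hpsd ⟨k, by omega⟩
    rw [hH] at hd
    simpa [ha, two_mul] using hd
  have key : ∀ k, 1 ≤ k → k < n → a k ^ 2 ≤ a (k - 1) * a (k + 1) := by
    intro k hk1 hkn
    have hod := aux_offdiag H hpsd ⟨k - 1, by omega⟩ ⟨k + 1, by omega⟩
    rw [hH, hH, hH, hH] at hod
    simp only at hod
    have e1 : k - 1 + (k + 1) = 2 * k := by omega
    have e2 : k + 1 + (k - 1) = 2 * k := by omega
    have e3 : k - 1 + (k - 1) = 2 * (k - 1) := by omega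
    have e4 : k + 1 + (k + 1) = 2 * (k + 1) := by omega
    rw [e1, e2, e3, e4] at hod
    simp only [ha]
    nlinarith [hod]
  have F := aux_chain n a h0 h1 hnn key
  constructor
  · intro j hj1 hj2
    set k : ℕ := n - j with hkdef
    have hk1 : 1 ≤ k := by omega
    have hkn : k < n := by omega
    obtain ⟨hak1, -, hak3⟩ := F k hk1 (by omega)
    obtain ⟨hak1', -, -⟩ := F (k + 1) (by omega) (by omega)
    have hstep : a k ^ (k + 1) ≤ a (k + 1) ^ k := hak3 hkn
    have hcast : (n : ℝ) - (j : ℝ) = (k : ℝ) := by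
      rw [hkdef]; push_cast [Nat.cast_sub (by omega : j ≤ n)]; ring
    rw [hcast]
    have hkpos : (0 : ℝ) < (k : ℝ) := by positivity
    have hbase : (0 : ℝ) ≤ a k := le_trans zero_le_one hak1
    have hrw : (a k ^ ((1 : ℝ) + 1 / (k : ℝ))) ^ k = a k ^ (k + 1) := by
      rw [← Real.rpow_natCast (a k ^ ((1 : ℝ) + 1 / (k : ℝ))) k, ← Real.rpow_mul hbase]
      have : ((1 : ℝ) + 1 / (k : ℝ)) * (k : ℝ) = ((k + 1 : ℕ) : ℝ) := by
        push_cast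
        rw [add_mul, one_mul, div_mul_cancel₀ _ (ne_of_gt hkpos)]
      rw [this, Real.rpow_natCast]
    have hle : (a k ^ ((1 : ℝ) + 1 / (k : ℝ))) ^ k ≤ a (k + 1) ^ k := by
      rw [hrw]; exact hstep
    have := (pow_le_pow_iff_left₀ (Real.rpow_nonneg hbase _)
      (le_trans zero_le_one hak1') (by omega)).mp hle
    have hidx : n - j + 1 = k + 1 := by omega
    rw [hidx]
    exact this
  · obtain ⟨-, h2, -⟩ := F n (by omega) le_rfl
    have : (y 2) ^ ((n : ℕ) : ℝ) = (y 2) ^ (n : ℕ) := Real.rpow_natCast _ _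
    rw [ge_iff_le, this]
    simpa [ha] using h2
end

section
/- Let Z ∈ Sym(n) and suppose Z restricted to the index set I (its principal submatrix Z(I)) is positive definite, and let A ∈ Sym(n) be a matrix whose principal submatrix A(J) on an index set J ⊇ I equals the identity on J∖I and zero interaction outside: specifically A(J∖I, J∖I) = Identity, A(J∖I, I) = 0, A restricted outside J arbitrary only in rows/columns of J∖I within J. Then for all sufficiently large x > 0, the principal submatrix (xA + Z)(J) is positive definite. -/
open Matrix

/-- Schur complement criterion (PosDef version, over ℝ): if `D` is positive
definite and the Schur complement `A - B * D⁻¹ * Bᵀ` is positive definite, then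
the block matrix is positive definite. -/
lemma posDef_fromBlocks₂₂' {m n : Type*} [Fintype m] [Fintype n] [DecidableEq n]
    (A : Matrix m m ℝ) (B : Matrix m n ℝ) {D : Matrix n n ℝ}
    (hD : D.PosDef) (hS : (A - B * D⁻¹ * Bᴴ).PosDef) :
    (fromBlocks A B Bᴴ D).PosDef := by
  haveI : Invertible D := hD.isUnit.invertible
  rw [posDef_iff_dotProduct_mulVec]
  constructor
  · rw [Matrix.IsHermitian.fromBlocks₂₂ _ _ hD.1]
    exact hS.1
  · intro v hv
    rw [dotProduct_mulVec, ← Sum.elim_comp_inl_inr v,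
      schur_complement_eq₂₂ A B _ _ hD.1]
    by_cases hx : v ∘ Sum.inl = 0
    · have hy : v ∘ Sum.inr ≠ 0 := by
        intro hy
        apply hv
        rw [← Sum.elim_comp_inl_inr v, hx, hy]
        ext (i | i) <;> rfl
      have h1 : star (v ∘ Sum.inl) ᵥ* (A - B * D⁻¹ * Bᴴ) ⬝ᵥ (v ∘ Sum.inl) = 0 := by
        rw [hx]; simp
      have h2 : (0:ℝ) <
          star ((D⁻¹ * Bᴴ) *ᵥ (v ∘ Sum.inl) + v ∘ Sum.inr) ᵥ* D ⬝ᵥ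
            ((D⁻¹ * Bᴴ) *ᵥ (v ∘ Sum.inl) + v ∘ Sum.inr) := by
        rw [hx]
        simpa [dotProduct_mulVec] using hD.dotProduct_mulVec_pos hy
      rw [h1]
      linarith
    · have h1 : (0:ℝ) < star (v ∘ Sum.inl) ᵥ* (A - B * D⁻¹ * Bᴴ) ⬝ᵥ (v ∘ Sum.inl) := by
        simpa [dotProduct_mulVec] using hS.dotProduct_mulVec_pos hx
      have h2 : (0:ℝ) ≤
          star ((D⁻¹ * Bᴴ) *ᵥ (v ∘ Sum.inl) + v ∘ Sum.inr) ᵥ* D ⬝ᵥ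
            ((D⁻¹ * Bᴴ) *ᵥ (v ∘ Sum.inl) + v ∘ Sum.inr) := by
        simpa only [dotProduct_mulVec] using hD.posSemidef.dotProduct_mulVec_nonneg _
      linarith

/-- A real symmetric matrix plus a large multiple of the identity is
positive definite. -/
lemma smul_one_add_posDef {m : Type*} [Fintype m] [DecidableEq m]
    (C : Matrix m m ℝ) (hC : C.IsHermitian) :
    ∃ T : ℝ, 0 < T ∧ ∀ x : ℝ, T ≤ x → (x • (1 : Matrix m m ℝ) + C).PosDef := by
  set S : ℝ := ∑ i, ∑ j, |C i j| with hSdef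
  have hS0 : 0 ≤ S :=
    Finset.sum_nonneg fun i _ => Finset.sum_nonneg fun j _ => abs_nonneg _
  refine ⟨S + 1, by linarith, fun x hx => ?_⟩
  rw [posDef_iff_dotProduct_mulVec]
  constructor
  · unfold Matrix.IsHermitian
    rw [conjTranspose_add, conjTranspose_smul, conjTranspose_one, hC.eq]
    simp
  · intro v hv
    have hvv0 : 0 ≤ v ⬝ᵥ v :=
      Finset.sum_nonneg fun i _ => mul_self_nonneg _
    have hvv : 0 < v ⬝ᵥ v := by
      rcases lt_or_eq_of_le hvv0 with h | h
      · exact h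
      · exact absurd (dotProduct_self_eq_zero.mp h.symm) hv
    have hsq : ∀ k, v k * v k ≤ v ⬝ᵥ v := fun k =>
      Finset.single_le_sum (fun i _ => mul_self_nonneg (v i)) (Finset.mem_univ k)
    have habs : ∀ i j, |v i * v j| ≤ v ⬝ᵥ v := by
      intro i j
      have h1 : |v i * v j| ≤ (v i * v i + v j * v j) / 2 := by
        rw [abs_mul]
        nlinarith [abs_nonneg (v i), abs_nonneg (v j), sq_abs (v i), sq_abs (v j),
          sq_nonneg (|v i| - |v j|)]
      calc |v i * v j| ≤ (v i * v i + v j * v j) / 2 := h1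
        _ ≤ v ⬝ᵥ v := by linarith [hsq i, hsq j]
    have hquad : -(S * (v ⬝ᵥ v)) ≤ v ⬝ᵥ C *ᵥ v := by
      have hterm : ∀ i j, -(|C i j| * (v ⬝ᵥ v)) ≤ v i * (C i j * v j) := by
        intro i j
        have h1 : |v i * (C i j * v j)| ≤ |C i j| * (v ⬝ᵥ v) := by
          have : |v i * (C i j * v j)| = |C i j| * |v i * v j| := by
            rw [abs_mul, abs_mul, abs_mul]; ring
          rw [this]
          exact mul_le_mul_of_nonneg_left (habs i j) (abs_nonneg _)
        linarith [neg_abs_le (v i * (C i j * v j))]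
      calc -(S * (v ⬝ᵥ v)) = ∑ i, ∑ j, -(|C i j| * (v ⬝ᵥ v)) := by
            rw [hSdef]; simp [Finset.sum_mul, Finset.sum_neg_distrib]
        _ ≤ ∑ i, ∑ j, v i * (C i j * v j) :=
            Finset.sum_le_sum fun i _ => Finset.sum_le_sum fun j _ => hterm i j
        _ = v ⬝ᵥ C *ᵥ v := by
            simp [dotProduct, Matrix.mulVec, Finset.mul_sum]
    have key : star v ⬝ᵥ (x • (1 : Matrix m m ℝ) + C) *ᵥ v
        = x * (v ⬝ᵥ v) + v ⬝ᵥ C *ᵥ v := by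
      simp [add_mulVec, smul_mulVec, dotProduct_add, dotProduct_smul]
    rw [key]
    nlinarith [hvv, hquad]

/-- Key step making `x_k` arbitrarily large: if `A` has identity block on `I₁`,
zeros elsewhere (in particular `A(I₂, I₁) = 0` and `A(I₂) = 0`), and `Z` is
symmetric with `Z(I₂)` positive definite, then `x • A + Z` is positive definite
for all sufficiently large `x > 0`. -/
theorem large_x_posdef (p r : ℕ)
    (Z₁₁ : Matrix (Fin p) (Fin p) ℝ) (Z₁₂ : Matrix (Fin p) (Fin r) ℝ)
    (Z₂₂ : Matrix (Fin r) (Fin r) ℝ)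
    (hZ₁₁ : Z₁₁.IsSymm) (hZ₂₂ : Z₂₂.PosDef) :
    ∃ T : ℝ, 0 < T ∧ ∀ x : ℝ, T ≤ x →
      (x • fromBlocks (1 : Matrix (Fin p) (Fin p) ℝ) 0 0 0 +
        fromBlocks Z₁₁ Z₁₂ Z₁₂ᵀ Z₂₂).PosDef := by
  have hZ₁₁' : Z₁₁.IsHermitian := by
    unfold Matrix.IsHermitian
    rw [conjTranspose_eq_transpose_of_trivial]
    exact hZ₁₁
  set C : Matrix (Fin p) (Fin p) ℝ := Z₁₁ - Z₁₂ * Z₂₂⁻¹ * Z₁₂ᴴ with hCdef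
  have hCh : C.IsHermitian := by
    apply hZ₁₁'.sub
    exact isHermitian_mul_mul_conjTranspose _ (hZ₂₂.1.inv)
  obtain ⟨T, hT, hTall⟩ := smul_one_add_posDef C hCh
  refine ⟨T, hT, fun x hx => ?_⟩
  have heq : x • fromBlocks (1 : Matrix (Fin p) (Fin p) ℝ) 0 0 0 +
        fromBlocks Z₁₁ Z₁₂ Z₁₂ᵀ Z₂₂
      = fromBlocks (x • (1 : Matrix (Fin p) (Fin p) ℝ) + Z₁₁) Z₁₂ Z₁₂ᴴ Z₂₂ := by
    rw [Matrix.fromBlocks_smul, Matrix.fromBlocks_add]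
    simp
  rw [heq]
  apply posDef_fromBlocks₂₂' _ _ hZ₂₂
  have : x • (1 : Matrix (Fin p) (Fin p) ℝ) + Z₁₁ - Z₁₂ * Z₂₂⁻¹ * Z₁₂ᴴ
      = x • (1 : Matrix (Fin p) (Fin p) ℝ) + C := by
    rw [hCdef]; abel
  rw [this]
  exact hTall x hx
end

section
/- Let α_2, ..., α_k be defined by the recursion α_{j+1} = 2 - 1/(α_{j+2}···α_{t_{j+1}}) if t_{j+1} ≤ k and α_{j+1} = 2 if t_{j+1} = k+1, with tail indices satisfying j+1 < t_{j+1} ≤ k+1. If one tail index t_{j+1} ≤ k is increased by 1 (all others fixed), then the new exponent ω_{j+1} is strictly larger than α_{j+1}, exponents with larger index are unchanged, and exponents with smaller index do not decrease. -/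
/-- `α` satisfies the tail-index recursion for tail indices `t`:
`α k = 2`, and for `j = 1, …, k-2`, `α (j+1) = 2` if `t (j+1) = k+1` and
`α (j+1) = 2 - 1/(α (j+2) ⋯ α (t (j+1)))` if `t (j+1) ≤ k`. -/
def SatisfiesTailRecursion (k : ℕ) (t : ℕ → ℕ) (α : ℕ → ℝ) : Prop :=
  α k = 2 ∧ ∀ j, 1 ≤ j → j ≤ k - 2 →
    (t (j + 1) = k + 1 → α (j + 1) = 2) ∧
    (t (j + 1) ≤ k →
      α (j + 1) = 2 - 1 / (∏ i ∈ Finset.Icc (j + 2) (t (j + 1)), α i))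

lemma one_lt_prod_real {s : Finset ℕ} (hs : s.Nonempty) {f : ℕ → ℝ}
    (h : ∀ m ∈ s, 1 < f m) : 1 < ∏ m ∈ s, f m := by
  calc (1:ℝ) = ∏ _m ∈ s, 1 := Finset.prod_const_one.symm
  _ < ∏ m ∈ s, f m :=
    Finset.prod_lt_prod_of_nonempty (fun _ _ => one_pos) h hs

/-- All exponents produced by the tail recursion lie in `(1, 2]`. -/
lemma tail_bounds (k : ℕ) (t : ℕ → ℕ)
    (ht : ∀ j, 1 ≤ j → j ≤ k - 1 → j + 2 ≤ t (j + 1) ∧ t (j + 1) ≤ k + 1)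
    (α : ℕ → ℝ) (hα : SatisfiesTailRecursion k t α) :
    ∀ i, 2 ≤ i → i ≤ k → 1 < α i ∧ α i ≤ 2 := by
  have key : ∀ n i, 2 ≤ i → i ≤ k → k - i ≤ n → 1 < α i ∧ α i ≤ 2 := by
    intro n
    induction n with
    | zero =>
      intro i h2 hik hn
      have : i = k := by omega
      subst this
      rw [hα.1]; norm_num
    | succ n ih =>
      intro i h2 hik hn
      rcases eq_or_lt_of_le hik with heq | hlt
      · subst heq; rw [hα.1]; norm_num
      · obtain ⟨j, rfl⟩ : ∃ j, i = j + 1 := ⟨i - 1, by omega⟩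
        have hj1 : 1 ≤ j := by omega
        have hj2 : j ≤ k - 2 := by omega
        have hrec := hα.2 j hj1 hj2
        have htj := ht j hj1 (by omega)
        rcases Nat.lt_or_ge (t (j + 1)) (k + 1) with hle | hge
        · have hle' : t (j + 1) ≤ k := by omega
          rw [hrec.2 hle']
          have hne : (Finset.Icc (j + 2) (t (j + 1))).Nonempty :=
            Finset.nonempty_Icc.mpr htj.1
          have hP : 1 < ∏ m ∈ Finset.Icc (j + 2) (t (j + 1)), α m := by
            refine one_lt_prod_real hne (fun m hm => ?_)
            rw [Finset.mem_Icc] at hm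
            exact (ih m (by omega) (by omega) (by omega)).1
          have h0 : (0:ℝ) < ∏ m ∈ Finset.Icc (j + 2) (t (j + 1)), α m := by
            linarith
          have h1 : 1 / (∏ m ∈ Finset.Icc (j + 2) (t (j + 1)), α m) < 1 := by
            rw [div_lt_one h0]; exact hP
          have h2' : 0 < 1 / (∏ m ∈ Finset.Icc (j + 2) (t (j + 1)), α m) :=
            by positivity
          constructor <;> linarith
        · have : t (j + 1) = k + 1 := by omega
          rw [hrec.1 this]; norm_num
  exact fun i h2 hik => key k i h2 hik (by omega)

/-- Monotonicity of the exponents in the tail indices: increasing one tail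
index `t (j₀+1) ≤ k` by `1` strictly increases the exponent `α (j₀+1)`, leaves
exponents with larger index unchanged, and does not decrease exponents with
smaller index. -/
theorem alpha_monotone_in_tail_index (k : ℕ) (hk : 2 ≤ k) (t : ℕ → ℕ)
    (ht : ∀ j, 1 ≤ j → j ≤ k - 1 → j + 2 ≤ t (j + 1) ∧ t (j + 1) ≤ k + 1)
    (j₀ : ℕ) (hj₀₁ : 1 ≤ j₀) (hj₀₂ : j₀ ≤ k - 1) (hj₀k : t (j₀ + 1) ≤ k)
    (α ω : ℕ → ℝ)
    (hα : SatisfiesTailRecursion k t α)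
    (hω : SatisfiesTailRecursion k
      (Function.update t (j₀ + 1) (t (j₀ + 1) + 1)) ω) :
    (∀ l, j₀ < l → l ≤ k - 1 → ω (l + 1) = α (l + 1)) ∧
    ω (j₀ + 1) > α (j₀ + 1) ∧
    (∀ l, 1 ≤ l → l < j₀ → ω (l + 1) ≥ α (l + 1)) := by
  set t' : ℕ → ℕ := Function.update t (j₀ + 1) (t (j₀ + 1) + 1) with ht'def
  have hj₀T : j₀ + 2 ≤ t (j₀ + 1) := (ht j₀ hj₀₁ hj₀₂).1
  have hj₀k2 : j₀ + 2 ≤ k := le_trans hj₀T hj₀k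
  have ht' : ∀ j, 1 ≤ j → j ≤ k - 1 → j + 2 ≤ t' (j + 1) ∧ t' (j + 1) ≤ k + 1 := by
    intro j h1 h2
    by_cases h : j = j₀
    · subst h
      rw [ht'def, Function.update_self]
      omega
    · rw [ht'def, Function.update_of_ne (by omega : j + 1 ≠ j₀ + 1)]
      exact ht j h1 h2
  have hαb := tail_bounds k t ht α hα
  have hωb := tail_bounds k t' ht' ω hω
  -- master downward induction
  have master : ∀ n i, 2 ≤ i → i ≤ k → k - i ≤ n →
      (j₀ + 1 < i → ω i = α i) ∧ (i = j₀ + 1 → α i < ω i) ∧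
      (i < j₀ + 1 → α i ≤ ω i) := by
    intro n
    induction n with
    | zero =>
      intro i h2 hik hn
      have : i = k := by omega
      subst this
      refine ⟨fun _ => by rw [hω.1, hα.1], fun h => by omega, fun h => by omega⟩
    | succ n ih =>
      intro i h2 hik hn
      rcases eq_or_lt_of_le hik with heq | hlt
      · subst heq
        refine ⟨fun _ => by rw [hω.1, hα.1], fun h => by omega, fun h => by omega⟩
      · obtain ⟨j, rfl⟩ : ∃ j, i = j + 1 := ⟨i - 1, by omega⟩
        have hj1 : 1 ≤ j := by omega
        have hj2 : j ≤ k - 2 := by omega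
        have hrecα := hα.2 j hj1 hj2
        have hrecω := hω.2 j hj1 hj2
        refine ⟨?_, ?_, ?_⟩
        · -- case j + 1 > j₀ + 1 : equality
          intro hgt
          have hne : j + 1 ≠ j₀ + 1 := by omega
          have htt' : t' (j + 1) = t (j + 1) := by
            rw [ht'def, Function.update_of_ne hne]
          have htj := ht j hj1 (by omega)
          rcases Nat.lt_or_ge (t (j + 1)) (k + 1) with hle | hge
          · have hle' : t (j + 1) ≤ k := by omega
            have hω2 : ω (j + 1)
                = 2 - 1 / (∏ m ∈ Finset.Icc (j + 2) (t (j + 1)), ω m) := by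
              have := hrecω.2 (by rw [htt']; exact hle')
              rwa [htt'] at this
            rw [hrecα.2 hle', hω2]
            have : (∏ m ∈ Finset.Icc (j + 2) (t (j + 1)), ω m)
                = ∏ m ∈ Finset.Icc (j + 2) (t (j + 1)), α m := by
              refine Finset.prod_congr rfl (fun m hm => ?_)
              obtain ⟨hm1, hm2⟩ := Finset.mem_Icc.mp hm
              exact (ih m (by omega) (by omega) (by omega)).1 (by omega)
            rw [this]
          · have hk1 : t (j + 1) = k + 1 := by omega
            rw [hrecα.1 hk1, hrecω.1 (by rw [htt']; exact hk1)]
        · -- case j + 1 = j₀ + 1 : strict increase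
          intro heq
          have hj₀ : j = j₀ := by omega
          subst hj₀
          have htj : t' (j + 1) = t (j + 1) + 1 := by
            rw [ht'def, Function.update_self]
          set T := t (j + 1) with hT
          have hPα : 1 < ∏ m ∈ Finset.Icc (j + 2) T, α m := by
            refine one_lt_prod_real (Finset.nonempty_Icc.mpr hj₀T) (fun m hm => ?_)
            rw [Finset.mem_Icc] at hm
            exact (hαb m (by omega) (by omega)).1
          have hP0 : (0:ℝ) < ∏ m ∈ Finset.Icc (j + 2) T, α m := by linarith
          rw [hrecα.2 hj₀k]
          rcases eq_or_lt_of_le hj₀k with hTk | hTk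
          · -- T = k: new exponent is 2
            rw [hrecω.1 (by omega)]
            have : 0 < 1 / (∏ m ∈ Finset.Icc (j + 2) T, α m) := by positivity
            linarith
          · -- T + 1 ≤ k
            have hle' : t' (j + 1) ≤ k := by omega
            rw [hrecω.2 hle', htj]
            have hprod : ∏ m ∈ Finset.Icc (j + 2) (T + 1), ω m
                = (∏ m ∈ Finset.Icc (j + 2) T, α m) * α (T + 1) := by
              rw [show (∏ m ∈ Finset.Icc (j + 2) (T + 1), ω m)
                  = ∏ m ∈ Finset.Icc (j + 2) (T + 1), α m from
                Finset.prod_congr rfl (fun m hm => by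
                  obtain ⟨hm1, hm2⟩ := Finset.mem_Icc.mp hm
                  exact (ih m (by omega) (by omega) (by omega)).1 (by omega))]
              exact Finset.prod_Icc_succ_top (by omega) α
            rw [hprod]
            have hαT : 1 < α (T + 1) := (hαb (T + 1) (by omega) (by omega)).1
            have hlt2 : (∏ m ∈ Finset.Icc (j + 2) T, α m)
                < (∏ m ∈ Finset.Icc (j + 2) T, α m) * α (T + 1) := by
              nlinarith
            have := one_div_lt_one_div_of_lt hP0 hlt2
            linarith
        · -- case j + 1 < j₀ + 1 : nondecrease
          intro hlt'
          have hne : j + 1 ≠ j₀ + 1 := by omega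
          have htt' : t' (j + 1) = t (j + 1) := by
            rw [ht'def, Function.update_of_ne hne]
          have htj := ht j hj1 (by omega)
          rcases Nat.lt_or_ge (t (j + 1)) (k + 1) with hle | hge
          · have hle' : t (j + 1) ≤ k := by omega
            have hω2 : ω (j + 1)
                = 2 - 1 / (∏ m ∈ Finset.Icc (j + 2) (t (j + 1)), ω m) := by
              have := hrecω.2 (by rw [htt']; exact hle')
              rwa [htt'] at this
            rw [hrecα.2 hle', hω2]
            have htj := ht j hj1 (by omega)
            have hPα : 1 < ∏ m ∈ Finset.Icc (j + 2) (t (j + 1)), α m := by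
              refine one_lt_prod_real (Finset.nonempty_Icc.mpr htj.1) (fun m hm => ?_)
              rw [Finset.mem_Icc] at hm
              exact (hαb m (by omega) (by omega)).1
            have hP0 : (0:ℝ) < ∏ m ∈ Finset.Icc (j + 2) (t (j + 1)), α m := by
              linarith
            have hprodle : (∏ m ∈ Finset.Icc (j + 2) (t (j + 1)), α m)
                ≤ ∏ m ∈ Finset.Icc (j + 2) (t (j + 1)), ω m := by
              refine Finset.prod_le_prod (fun m hm => ?_) (fun m hm => ?_)
              · rw [Finset.mem_Icc] at hm
                have := (hαb m (by omega) (by omega)).1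
                linarith
              · obtain ⟨hm1, hm2⟩ := Finset.mem_Icc.mp hm
                have h3 := ih m (by omega) (by omega) (by omega)
                rcases lt_trichotomy m (j₀ + 1) with hc | hc | hc
                · exact h3.2.2 hc
                · exact le_of_lt (h3.2.1 hc)
                · exact le_of_eq (h3.1 hc).symm
            have := one_div_le_one_div_of_le hP0 hprodle
            linarith
          · have hk1 : t (j + 1) = k + 1 := by omega
            rw [hrecα.1 hk1, hrecω.1 (by rw [htt']; exact hk1)]
  refine ⟨?_, ?_, ?_⟩
  · intro l hl1 hl2
    exact (master k (l + 1) (by omega) (by omega) (by omega)).1 (by omega)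
  · exact (master k (j₀ + 1) (by omega) (by omega) (by omega)).2.1 rfl
  · intro l hl1 hl2
    exact (master k (l + 1) (by omega) (by omega) (by omega)).2.2 (by omega)
end
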